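/- For every n ≥ 6, there exists a planar graph on n vertices containing at least h₀(n) induced 6-cycles; consequently f_I(n, C₆) ≥ h₀(n). -/

import Mathlib

open SimpleGraph

/-- `H` is a minor of `G`: there is a family of nonempty, connected, pairwise disjoint
branch sets in `G`, one for each vertex of `H`, such that adjacent vertices of `H`
have adjacent branch sets. -/
def IsMinorOf {W : Type*} {V : Type*} (H : SimpleGraph W) (G : SimpleGraph V) : Prop :=
  ∃ φ : W → Set V,
    (∀ w, (G.induce (φ w)).Connected) ∧
    (Pairwise fun w₁ w₂ => Disjoint (φ w₁) (φ w₂)) ∧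
    ∀ ⦃w₁ w₂⦄, H.Adj w₁ w₂ → ∃ x ∈ φ w₁, ∃ y ∈ φ w₂, G.Adj x y

/-- A graph is planar iff (by Wagner's theorem) it has no `K₅` minor and no `K₃,₃` minor. -/
def SimpleGraph.Planar {V : Type*} (G : SimpleGraph V) : Prop :=
  ¬ IsMinorOf (completeGraph (Fin 5)) G ∧
  ¬ IsMinorOf (completeBipartiteGraph (Fin 3) (Fin 3)) G

/-- `s` is a set of `m` vertices of `G` whose induced subgraph is a cycle of length `m`. -/
def IsIndCycle {V : Type*} (G : SimpleGraph V) (m : ℕ) (s : Finset V) : Prop :=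
  s.card = m ∧ Nonempty ((G.induce (s : Set V)) ≃g (cycleGraph m))

/-- The number of induced 6-cycles of `G`. -/
noncomputable def c6Count {V : Type*} [Fintype V] (G : SimpleGraph V) : ℕ :=
  {s : Finset V | IsIndCycle G 6 s}.ncard

/-- The number of induced 6-cycles of `G` containing the vertex `v`. -/
noncomputable def c6CountAt {V : Type*} [Fintype V] (G : SimpleGraph V) (v : V) : ℕ :=
  {s : Finset V | IsIndCycle G 6 s ∧ v ∈ s}.ncard

/-- `f_I(n, C₆)`: the maximum number of induced 6-cycles over all planar graphs
on `n` vertices. -/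
noncomputable def fI (n : ℕ) : ℕ :=
  sSup {m | ∃ G : SimpleGraph (Fin n), G.Planar ∧ c6Count G = m}

def h0 (n : ℕ) : ℕ :=
  if n % 3 = 0 then (n / 3 - 1) ^ 3
  else if n % 3 = 1 then ((n - 4) / 3) ^ 2 * ((n - 1) / 3)
  else ((n - 2) / 3) ^ 2 * ((n - 5) / 3)

def h1 (n : ℕ) : ℕ :=
  if n % 3 = 0 then (n / 3 - 1) ^ 2
  else if n % 3 = 1 then ((n - 4) / 3) ^ 2
  else ((n - 2) / 3) * ((n - 5) / 3)

/-- `x` and `y` are principal neighbours in `G`: they are adjacent and some induced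
6-cycle of `G` contains both of them. -/
def PrincipalNbr {V : Type*} (G : SimpleGraph V) (x y : V) : Prop :=
  G.Adj x y ∧ ∃ s : Finset V, IsIndCycle G 6 s ∧ x ∈ s ∧ y ∈ s

/-- `X^{uvw}`: the vertices of `G - {u,v,w}` lying in some induced 6-cycle of `G`
containing the path `u-v-w` (i.e. containing `u`, `v` and `w`). -/
def Xset {V : Type*} (G : SimpleGraph V) (u v w : V) : Set V :=
  {x | x ≠ u ∧ x ≠ v ∧ x ≠ w ∧
    ∃ s : Finset V, IsIndCycle G 6 s ∧ u ∈ s ∧ v ∈ s ∧ w ∈ s ∧ x ∈ s}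

def X1set {V : Type*} (G : SimpleGraph V) (u v w : V) : Set V :=
  Xset G u v w ∩ G.neighborSet u

def X3set {V : Type*} (G : SimpleGraph V) (u v w : V) : Set V :=
  Xset G u v w ∩ G.neighborSet w

def X2set {V : Type*} (G : SimpleGraph V) (u v w : V) : Set V :=
  Xset G u v w \ (X1set G u v w ∪ X3set G u v w)

/-- The bipartite subgraph of `G` induced between the disjoint vertex sets `S` and `T`:
the graph on `S ∪ T` whose edges are exactly the edges of `G` with one endpoint in `S`
and one in `T`. -/
def bipBetween {V : Type*} (G : SimpleGraph V) (S T : Set V) : SimpleGraph ↑(S ∪ T) where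
  Adj x y := G.Adj x y ∧ ((↑x ∈ S ∧ ↑y ∈ T) ∨ (↑x ∈ T ∧ ↑y ∈ S))
  symm := by
    constructor
    intro x y ⟨h, h2⟩
    exact ⟨h.symm, (h2.imp And.symm And.symm).symm⟩
  loopless := by
    constructor
    intro x ⟨h, _⟩
    exact h.ne rfl

/-- `a b c d e f` are the vertices, in cyclic order, of an induced 6-cycle of `G`. -/
def IsIndC6On {V : Type*} [DecidableEq V] (G : SimpleGraph V) (a b c d e f : V) : Prop :=
  ([a, b, c, d, e, f] : List V).Nodup ∧
  IsIndCycle G 6 {a, b, c, d, e, f} ∧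
  G.Adj a b ∧ G.Adj b c ∧ G.Adj c d ∧ G.Adj d e ∧ G.Adj e f ∧ G.Adj f a ∧
  ¬ G.Adj a c ∧ ¬ G.Adj a d ∧ ¬ G.Adj a e ∧
  ¬ G.Adj b d ∧ ¬ G.Adj b e ∧ ¬ G.Adj b f ∧
  ¬ G.Adj c e ∧ ¬ G.Adj c f ∧ ¬ G.Adj d f

/-- `x` and `y` are consecutive entries (in either order) of the list `l`. -/
def ListConsec {V : Type*} (l : List V) (x y : V) : Prop :=
  ∃ i : ℕ, (l[i]? = some x ∧ l[i + 1]? = some y) ∨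
           (l[i]? = some y ∧ l[i + 1]? = some x)

/-- The data witnessing that `G` belongs to the family `𝓕_n` (with `n = Fintype.card V`):
the vertex set is partitioned as `{u₁,u₂,u₃} ∪ A ∪ B ∪ C` with `|A|, |B|, |C|` as equal
as possible, every vertex of `A` is joined to `u₁, u₂`, every vertex of `B` to `u₂, u₃`,
every vertex of `C` to `u₃, u₁`, and all remaining edges are consecutive along some
fixed orderings (paths) of `A`, `B`, `C`. -/
def FWitness {V : Type*} [Fintype V] [DecidableEq V] (G : SimpleGraph V) (u1 u2 u3 : V)
    (A B C : Finset V) : Prop :=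
  u1 ≠ u2 ∧ u1 ≠ u3 ∧ u2 ≠ u3 ∧
  u1 ∉ A ∪ B ∪ C ∧ u2 ∉ A ∪ B ∪ C ∧ u3 ∉ A ∪ B ∪ C ∧
  Disjoint A B ∧ Disjoint A C ∧ Disjoint B C ∧
  ({u1, u2, u3} : Finset V) ∪ A ∪ B ∪ C = Finset.univ ∧
  A.card + B.card + C.card = Fintype.card V - 3 ∧
  A.card ≤ B.card + 1 ∧ B.card ≤ A.card + 1 ∧
  A.card ≤ C.card + 1 ∧ C.card ≤ A.card + 1 ∧
  B.card ≤ C.card + 1 ∧ C.card ≤ B.card + 1 ∧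
  (∀ a ∈ A, G.Adj u1 a ∧ G.Adj u2 a) ∧
  (∀ b ∈ B, G.Adj u2 b ∧ G.Adj u3 b) ∧
  (∀ c ∈ C, G.Adj u3 c ∧ G.Adj u1 c) ∧
  ∃ la lb lc : List V,
    la.Nodup ∧ lb.Nodup ∧ lc.Nodup ∧
    la.toFinset = A ∧ lb.toFinset = B ∧ lc.toFinset = C ∧
    ∀ x y, G.Adj x y →
      (x = u1 ∧ (y ∈ A ∨ y ∈ C)) ∨ (y = u1 ∧ (x ∈ A ∨ x ∈ C)) ∨
      (x = u2 ∧ (y ∈ A ∨ y ∈ B)) ∨ (y = u2 ∧ (x ∈ A ∨ x ∈ B)) ∨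
      (x = u3 ∧ (y ∈ B ∨ y ∈ C)) ∨ (y = u3 ∧ (x ∈ B ∨ x ∈ C)) ∨
      ListConsec la x y ∨ ListConsec lb x y ∨ ListConsec lc x y

/-- `G` belongs to the family `𝓕_n`, where `n = Fintype.card V`. -/
def InFFamily {V : Type*} [Fintype V] [DecidableEq V] (G : SimpleGraph V) : Prop :=
  ∃ (u1 u2 u3 : V) (A B C : Finset V), FWitness G u1 u2 u3 A B C

section Aux

def HRel (n a b : ℕ) : Prop :=
  (a = 0 ∧ 3 ≤ b ∧ b < n ∧ (b < 3 + (n-3)/3 ∨ 3 + (n-3)/3 + (n-2)/3 ≤ b)) ∨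
  (a = 1 ∧ 3 ≤ b ∧ b < 3 + (n-3)/3 + (n-2)/3) ∨
  (a = 2 ∧ 3 + (n-3)/3 ≤ b ∧ b < n)

def GG (n : ℕ) : SimpleGraph (Fin n) :=
  SimpleGraph.fromRel (fun x y => HRel n x.val y.val)

lemma GG_adj {n : ℕ} (x y : Fin n) :
    (GG n).Adj x y ↔ x.val ≠ y.val ∧ (HRel n x.val y.val ∨ HRel n y.val x.val) := by
  rw [GG, SimpleGraph.fromRel_adj, Fin.ne_iff_vne]

lemma isIndCycle_of_fun {V : Type*} [DecidableEq V] (G : SimpleGraph V) (v : Fin 6 → V)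
    (hinj : Function.Injective v)
    (hadj : ∀ i j : Fin 6, G.Adj (v i) (v j) ↔ (cycleGraph 6).Adj i j) :
    IsIndCycle G 6 (Finset.univ.image v) := by
  constructor
  · rw [Finset.card_image_of_injective _ hinj, Finset.card_univ, Fintype.card_fin]
  · set s : Finset V := Finset.univ.image v with hs
    have hmem : ∀ i, v i ∈ (s : Set V) := by intro i; simp [hs]
    let f : Fin 6 → (s : Set V) := fun i => ⟨v i, hmem i⟩
    have hbij : Function.Bijective f := by
      constructor
      · intro i j h; exact hinj (congrArg Subtype.val h)
      · rintro ⟨x, hx⟩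
        simp only [hs, Finset.coe_image, Finset.coe_univ, Set.image_univ, Set.mem_range] at hx
        obtain ⟨i, rfl⟩ := hx; exact ⟨i, rfl⟩
    refine ⟨(RelIso.symm ⟨Equiv.ofBijective f hbij, ?_⟩ : G.induce (s : Set V) ≃g cycleGraph 6)⟩
    intro i j
    simp only [Equiv.ofBijective_apply, comap_adj, Function.Embedding.coe_subtype, f]
    exact hadj i j

lemma isIndCycle_six {V : Type*} [DecidableEq V] (G : SimpleGraph V)
    (v0 v1 v2 v3 v4 v5 : V)
    (d01 : v0 ≠ v1) (d02 : v0 ≠ v2) (d03 : v0 ≠ v3) (d04 : v0 ≠ v4) (d05 : v0 ≠ v5)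
    (d12 : v1 ≠ v2) (d13 : v1 ≠ v3) (d14 : v1 ≠ v4) (d15 : v1 ≠ v5)
    (d23 : v2 ≠ v3) (d24 : v2 ≠ v4) (d25 : v2 ≠ v5)
    (d34 : v3 ≠ v4) (d35 : v3 ≠ v5) (d45 : v4 ≠ v5)
    (h01 : G.Adj v0 v1) (h12 : G.Adj v1 v2) (h23 : G.Adj v2 v3) (h34 : G.Adj v3 v4)
    (h45 : G.Adj v4 v5) (h50 : G.Adj v5 v0)
    (n02 : ¬ G.Adj v0 v2) (n03 : ¬ G.Adj v0 v3) (n04 : ¬ G.Adj v0 v4)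
    (n13 : ¬ G.Adj v1 v3) (n14 : ¬ G.Adj v1 v4) (n15 : ¬ G.Adj v1 v5)
    (n24 : ¬ G.Adj v2 v4) (n25 : ¬ G.Adj v2 v5) (n35 : ¬ G.Adj v3 v5) :
    IsIndCycle G 6 (Finset.univ.image ![v0,v1,v2,v3,v4,v5]) := by
  apply isIndCycle_of_fun
  · intro i j hij
    fin_cases i <;> fin_cases j <;>
      first
      | rfl
      | exact absurd hij (by exact d01) | exact absurd hij.symm (by exact d01)
      | exact absurd hij (by exact d02) | exact absurd hij.symm (by exact d02)
      | exact absurd hij (by exact d03) | exact absurd hij.symm (by exact d03)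
      | exact absurd hij (by exact d04) | exact absurd hij.symm (by exact d04)
      | exact absurd hij (by exact d05) | exact absurd hij.symm (by exact d05)
      | exact absurd hij (by exact d12) | exact absurd hij.symm (by exact d12)
      | exact absurd hij (by exact d13) | exact absurd hij.symm (by exact d13)
      | exact absurd hij (by exact d14) | exact absurd hij.symm (by exact d14)
      | exact absurd hij (by exact d15) | exact absurd hij.symm (by exact d15)
      | exact absurd hij (by exact d23) | exact absurd hij.symm (by exact d23)
      | exact absurd hij (by exact d24) | exact absurd hij.symm (by exact d24)
      | exact absurd hij (by exact d25) | exact absurd hij.symm (by exact d25)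
      | exact absurd hij (by exact d34) | exact absurd hij.symm (by exact d34)
      | exact absurd hij (by exact d35) | exact absurd hij.symm (by exact d35)
      | exact absurd hij (by exact d45) | exact absurd hij.symm (by exact d45)
  · intro i j
    fin_cases i <;> fin_cases j <;>
      first
      | exact iff_of_true (by exact h01) (by decide)
      | exact iff_of_true (by exact h12) (by decide)
      | exact iff_of_true (by exact h23) (by decide)
      | exact iff_of_true (by exact h34) (by decide)
      | exact iff_of_true (by exact h45) (by decide)
      | exact iff_of_true (by exact h50) (by decide)
      | exact iff_of_true (by exact h01.symm) (by decide)
      | exact iff_of_true (by exact h12.symm) (by decide)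
      | exact iff_of_true (by exact h23.symm) (by decide)
      | exact iff_of_true (by exact h34.symm) (by decide)
      | exact iff_of_true (by exact h45.symm) (by decide)
      | exact iff_of_true (by exact h50.symm) (by decide)
      | exact iff_of_false (by exact G.irrefl) (by decide)
      | exact iff_of_false (by exact n02) (by decide)
      | exact iff_of_false (by exact n03) (by decide)
      | exact iff_of_false (by exact n04) (by decide)
      | exact iff_of_false (by exact n13) (by decide)
      | exact iff_of_false (by exact n14) (by decide)
      | exact iff_of_false (by exact n15) (by decide)
      | exact iff_of_false (by exact n24) (by decide)
      | exact iff_of_false (by exact n25) (by decide)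
      | exact iff_of_false (by exact n35) (by decide)
      | exact iff_of_false (by exact fun h => n02 h.symm) (by decide)
      | exact iff_of_false (by exact fun h => n03 h.symm) (by decide)
      | exact iff_of_false (by exact fun h => n04 h.symm) (by decide)
      | exact iff_of_false (by exact fun h => n13 h.symm) (by decide)
      | exact iff_of_false (by exact fun h => n14 h.symm) (by decide)
      | exact iff_of_false (by exact fun h => n15 h.symm) (by decide)
      | exact iff_of_false (by exact fun h => n24 h.symm) (by decide)
      | exact iff_of_false (by exact fun h => n25 h.symm) (by decide)
      | exact iff_of_false (by exact fun h => n35 h.symm) (by decide)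

lemma cycle_of_abc {n : ℕ} (hn : 6 ≤ n) (a b c : Fin n)
    (ha : 3 ≤ a.val ∧ a.val < 3 + (n-3)/3)
    (hb : 3 + (n-3)/3 ≤ b.val ∧ b.val < 3 + (n-3)/3 + (n-2)/3)
    (hc : 3 + (n-3)/3 + (n-2)/3 ≤ c.val) :
    IsIndCycle (GG n) 6 (Finset.univ.image
      ![⟨0, by omega⟩, a, ⟨1, by omega⟩, b, ⟨2, by omega⟩, c]) := by
  have hav := a.isLt; have hbv := b.isLt; have hcv := c.isLt
  apply isIndCycle_six <;>
    first
    | (rw [Fin.ne_iff_vne]; try simp only [Fin.val_mk]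
       omega)
    | (rw [GG_adj]; try simp only [Fin.val_mk]
       unfold HRel; omega)

lemma indep {n : ℕ} {x y : Fin n} (hx : 3 ≤ x.val) (hy : 3 ≤ y.val) : ¬ (GG n).Adj x y := by
  rw [GG_adj]; unfold HRel; omega

lemma hubs {n : ℕ} (x : Fin n) (hx : 3 ≤ x.val) :
    ∃ h1 h2 : ℕ, ∀ y : Fin n, (GG n).Adj x y → y.val = h1 ∨ y.val = h2 := by
  by_cases c1 : x.val < 3 + (n-3)/3
  · exact ⟨0, 1, fun y hy => by rw [GG_adj] at hy; unfold HRel at hy; omega⟩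
  · by_cases c2 : x.val < 3 + (n-3)/3 + (n-2)/3
    · exact ⟨1, 2, fun y hy => by rw [GG_adj] at hy; unfold HRel at hy; omega⟩
    · exact ⟨0, 2, fun y hy => by rw [GG_adj] at hy; unfold HRel at hy; omega⟩

lemma branch_singleton {n : ℕ} {S : Set (Fin n)} (hcon : ((GG n).induce S).Connected)
    (hS : ∀ z ∈ S, 3 ≤ z.val) : ∃ x, 3 ≤ x.val ∧ S = {x} := by
  have hbot : (GG n).induce S = ⊥ := by
    ext ⟨u, hu⟩ ⟨v, hv⟩
    simp only [comap_adj, Function.Embedding.coe_subtype, bot_adj, iff_false]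
    exact indep (hS u hu) (hS v hv)
  obtain ⟨⟨x, hx⟩⟩ := hcon.nonempty
  refine ⟨x, hS x hx, ?_⟩
  ext y
  constructor
  · intro hy
    have hr := hcon.preconnected ⟨y, hy⟩ ⟨x, hx⟩
    rw [hbot, reachable_bot] at hr
    exact congrArg Subtype.val hr
  · rintro rfl; exact hx

lemma exists_avoid {n : ℕ} {W : Type*} [Fintype W] (hW : 3 < Fintype.card W)
    (φ : W → Set (Fin n)) (hne : ∀ w, (φ w).Nonempty)
    (hdisj : Pairwise fun w₁ w₂ => Disjoint (φ w₁) (φ w₂)) :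
    ∃ w, ∀ z ∈ φ w, 3 ≤ z.val := by
  by_contra hcon
  push_neg at hcon
  have hch : ∀ w : W, ∃ z : Fin n, z ∈ φ w ∧ z.val < 3 := by
    intro w; obtain ⟨z, hz, hz3⟩ := hcon w; exact ⟨z, hz, by omega⟩
  choose g hg1 hg2 using hch
  have hginj : Function.Injective (fun w => (⟨(g w).val, hg2 w⟩ : Fin 3)) := by
    intro w w' h
    by_contra hne'
    have hv2 : ((⟨(g w).val, hg2 w⟩ : Fin 3)).val = ((⟨(g w').val, hg2 w'⟩ : Fin 3)).val :=
      congrArg Fin.val h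
    simp only [Fin.val_mk] at hv2
    have hvv : (g w : Fin n) = g w' := Fin.ext hv2
    exact (hdisj hne').ne_of_mem (hg1 w) (hg1 w') hvv
  have := Fintype.card_le_of_injective _ hginj
  simp at this; omega

lemma pigeon3 {n : ℕ} {W : Type*} (φ : W → Set (Fin n))
    (hcon : ∀ w, ((GG n).induce (φ w)).Connected)
    (hdisj : Pairwise fun w₁ w₂ => Disjoint (φ w₁) (φ w₂))
    (w t1 t2 t3 : W) (h12 : t1 ≠ t2) (h13 : t1 ≠ t3) (h23 : t2 ≠ t3)
    (hw : ∀ z ∈ φ w, 3 ≤ z.val)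
    (he : ∀ t ∈ ({t1, t2, t3} : Set W), ∃ x ∈ φ w, ∃ y ∈ φ t, (GG n).Adj x y) : False := by
  obtain ⟨x, hx3, hxx⟩ := branch_singleton (hcon w) hw
  obtain ⟨a1, a2, ha⟩ := hubs x hx3
  have key : ∀ t ∈ ({t1, t2, t3} : Set W), ∃ y ∈ φ t, (y.val = a1 ∨ y.val = a2) := by
    intro t ht
    obtain ⟨x', hx', y, hy, hxy⟩ := he t ht
    rw [hxx] at hx'
    rw [Set.mem_singleton_iff] at hx'
    subst hx'
    exact ⟨y, hy, ha y hxy⟩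
  obtain ⟨y1, hy1, hv1⟩ := key t1 (by simp)
  obtain ⟨y2, hy2, hv2⟩ := key t2 (by simp)
  obtain ⟨y3, hy3, hv3⟩ := key t3 (by simp)
  have contra : ∀ (i j : W), i ≠ j → ∀ y, y ∈ φ i → y ∈ φ j → False := by
    intro i j hij y hyi hyj
    exact (hdisj hij).ne_of_mem hyi hyj rfl
  rcases hv1 with h1 | h1 <;> rcases hv2 with h2 | h2 <;> rcases hv3 with h3 | h3
  · exact contra t1 t2 h12 y1 hy1 (show y1 ∈ φ t2 by rw [show y1 = y2 from Fin.ext (by omega)]; exact hy2)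
  · exact contra t1 t2 h12 y1 hy1 (show y1 ∈ φ t2 by rw [show y1 = y2 from Fin.ext (by omega)]; exact hy2)
  · exact contra t1 t3 h13 y1 hy1 (show y1 ∈ φ t3 by rw [show y1 = y3 from Fin.ext (by omega)]; exact hy3)
  · exact contra t2 t3 h23 y2 hy2 (show y2 ∈ φ t3 by rw [show y2 = y3 from Fin.ext (by omega)]; exact hy3)
  · exact contra t2 t3 h23 y2 hy2 (show y2 ∈ φ t3 by rw [show y2 = y3 from Fin.ext (by omega)]; exact hy3)
  · exact contra t1 t3 h13 y1 hy1 (show y1 ∈ φ t3 by rw [show y1 = y3 from Fin.ext (by omega)]; exact hy3)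
  · exact contra t1 t2 h12 y1 hy1 (show y1 ∈ φ t2 by rw [show y1 = y2 from Fin.ext (by omega)]; exact hy2)
  · exact contra t1 t2 h12 y1 hy1 (show y1 ∈ φ t2 by rw [show y1 = y2 from Fin.ext (by omega)]; exact hy2)

lemma GG_planar {n : ℕ} (hn : 6 ≤ n) : (GG n).Planar := by
  constructor
  · rintro ⟨φ, hcon, hdisj, hadj⟩
    have hne : ∀ w, (φ w).Nonempty := fun w => by
      obtain ⟨⟨x, hx⟩⟩ := (hcon w).nonempty; exact ⟨x, hx⟩
    obtain ⟨w, hw⟩ := exists_avoid (by simp) φ hne hdisj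
    obtain ⟨t1, t2, t3, h12, h13, h23, hw1, hw2, hw3⟩ :
        ∃ a b c : Fin 5, a ≠ b ∧ a ≠ c ∧ b ≠ c ∧ a ≠ w ∧ b ≠ w ∧ c ≠ w := by
      fin_cases w <;> decide
    refine pigeon3 φ hcon hdisj w t1 t2 t3 h12 h13 h23 hw ?_
    intro t ht
    simp only [Set.mem_insert_iff, Set.mem_singleton_iff] at ht
    have hwt : w ≠ t := by
      rcases ht with rfl | rfl | rfl
      exacts [hw1.symm, hw2.symm, hw3.symm]
    exact hadj ((top_adj _ _).mpr hwt)
  · rintro ⟨φ, hcon, hdisj, hadj⟩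
    have hne : ∀ w, (φ w).Nonempty := fun w => by
      obtain ⟨⟨x, hx⟩⟩ := (hcon w).nonempty; exact ⟨x, hx⟩
    obtain ⟨w, hw⟩ := exists_avoid (by simp) φ hne hdisj
    rcases w with i | i
    · refine pigeon3 φ hcon hdisj (Sum.inl i) (Sum.inr 0) (Sum.inr 1) (Sum.inr 2)
        (by simp) (by simp) (by simp) hw ?_
      intro t ht
      simp only [Set.mem_insert_iff, Set.mem_singleton_iff] at ht
      have hAdj : (completeBipartiteGraph (Fin 3) (Fin 3)).Adj (Sum.inl i) t := by
        rcases ht with rfl | rfl | rfl <;> simp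
      exact hadj hAdj
    · refine pigeon3 φ hcon hdisj (Sum.inr i) (Sum.inl 0) (Sum.inl 1) (Sum.inl 2)
        (by simp) (by simp) (by simp) hw ?_
      intro t ht
      simp only [Set.mem_insert_iff, Set.mem_singleton_iff] at ht
      have hAdj : (completeBipartiteGraph (Fin 3) (Fin 3)).Adj (Sum.inr i) t := by
        rcases ht with rfl | rfl | rfl <;> simp
      exact hadj hAdj

lemma image_univ_six {α : Type*} [DecidableEq α] (v0 v1 v2 v3 v4 v5 : α) :
    Finset.univ.image ![v0,v1,v2,v3,v4,v5] = {v0,v1,v2,v3,v4,v5} := by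
  ext x
  simp only [Finset.mem_image, Finset.mem_univ, true_and, Finset.mem_insert, Finset.mem_singleton]
  constructor
  · rintro ⟨i, rfl⟩
    fin_cases i
    exacts [Or.inl rfl, Or.inr (Or.inl rfl), Or.inr (Or.inr (Or.inl rfl)),
      Or.inr (Or.inr (Or.inr (Or.inl rfl))), Or.inr (Or.inr (Or.inr (Or.inr (Or.inl rfl)))),
      Or.inr (Or.inr (Or.inr (Or.inr (Or.inr rfl))))]
  · rintro (rfl | rfl | rfl | rfl | rfl | rfl)
    exacts [⟨0, rfl⟩, ⟨1, rfl⟩, ⟨2, rfl⟩, ⟨3, rfl⟩, ⟨4, rfl⟩, ⟨5, rfl⟩]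

lemma h0_eq {n : ℕ} (hn : 6 ≤ n) : h0 n = (n-3)/3 * ((n-2)/3) * ((n-1)/3) := by
  unfold h0
  split_ifs with h1 h2
  · have e1 : (n-3)/3 = n/3 - 1 := by omega
    have e2 : (n-2)/3 = n/3 - 1 := by omega
    have e3 : (n-1)/3 = n/3 - 1 := by omega
    rw [e1, e2, e3]; ring
  · have e1 : (n-3)/3 = (n-4)/3 := by omega
    have e2 : (n-2)/3 = (n-4)/3 := by omega
    have e3 : (n-1)/3 = (n-1)/3 := rfl
    rw [e1, e2]; ring
  · have h2 : n % 3 = 2 := by omega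
    have e1 : (n-3)/3 = (n-5)/3 := by omega
    have e3 : (n-1)/3 = (n-2)/3 := by omega
    rw [e1, e3]; ring

def fmk (n : ℕ) (hn : 0 < n) (m : ℕ) : Fin n := ⟨m % n, Nat.mod_lt _ hn⟩

def FF (n : ℕ) (hn : 6 ≤ n) (t : ℕ × ℕ × ℕ) : Finset (Fin n) :=
  {⟨0, by omega⟩, fmk n (by omega) (3 + t.1), ⟨1, by omega⟩,
   fmk n (by omega) (3 + (n-3)/3 + t.2.1), ⟨2, by omega⟩,
   fmk n (by omega) (3 + (n-3)/3 + (n-2)/3 + t.2.2)}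

lemma count_lb {n : ℕ} (hn : 6 ≤ n) : h0 n ≤ c6Count (GG n) := by
  rw [h0_eq hn]
  have hsum : 3 + (n-3)/3 + (n-2)/3 + (n-1)/3 = n := by omega
  set p := (n-3)/3 with hp
  set q := (n-2)/3 with hq
  set r := (n-1)/3 with hr
  set D : Finset (ℕ × ℕ × ℕ) := Finset.range p ×ˢ Finset.range q ×ˢ Finset.range r with hD
  have hmemD : ∀ t ∈ D, t.1 < p ∧ t.2.1 < q ∧ t.2.2 < r := by
    intro t ht
    simp only [hD, Finset.mem_product, Finset.mem_range] at ht
    exact ⟨ht.1, ht.2.1, ht.2.2⟩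
  have hval : ∀ m : ℕ, m < n → (fmk n (by omega) m).val = m := by
    intro m hm; exact Nat.mod_eq_of_lt hm
  have hind : ∀ t ∈ D, IsIndCycle (GG n) 6 (FF n hn t) := by
    intro t ht
    obtain ⟨h1, h2, h3⟩ := hmemD t ht
    have key := cycle_of_abc hn (fmk n (by omega) (3 + t.1))
      (fmk n (by omega) (3 + p + t.2.1)) (fmk n (by omega) (3 + p + q + t.2.2))
      (by rw [hval _ (by omega)]; omega)
      (by rw [hval _ (by omega)]; omega)
      (by rw [hval _ (by omega)]; omega)
    rw [image_univ_six] at key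
    exact key
  have hinj : Set.InjOn (FF n hn) D := by
    intro t ht t' ht' heq
    obtain ⟨h1, h2, h3⟩ := hmemD t ht
    obtain ⟨h1', h2', h3'⟩ := hmemD t' ht'
    obtain ⟨i, j, k⟩ := t
    obtain ⟨i', j', k'⟩ := t'
    simp only at h1 h2 h3 h1' h2' h3' ⊢
    have hmem : ∀ x : Fin n, x ∈ FF n hn (i, j, k) ↔ x ∈ FF n hn (i', j', k') := by
      intro x; rw [heq]
    have extract : ∀ (m m' : ℕ) (hm : 3 ≤ m) (hm2 : m < n) (hm' : 3 ≤ m') (hm2' : m' < n),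
        True := fun _ _ _ _ _ _ => trivial
    -- membership of the three path vertices
    have gi := (hmem (fmk n (by omega) (3 + i))).mp (by
      simp only [FF, Finset.mem_insert, Finset.mem_singleton]; tauto)
    have gj := (hmem (fmk n (by omega) (3 + p + j))).mp (by
      simp only [FF, Finset.mem_insert, Finset.mem_singleton]; tauto)
    have gk := (hmem (fmk n (by omega) (3 + p + q + k))).mp (by
      simp only [FF, Finset.mem_insert, Finset.mem_singleton]; tauto)
    simp only [FF, Finset.mem_insert, Finset.mem_singleton, Fin.ext_iff, fmk,
      Fin.val_mk] at gi gj gk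
    rw [Nat.mod_eq_of_lt (show 3 + i < n by omega),
        Nat.mod_eq_of_lt (show 3 + i' < n by omega),
        Nat.mod_eq_of_lt (show 3 + p + j' < n by omega),
        Nat.mod_eq_of_lt (show 3 + p + q + k' < n by omega)] at gi
    rw [Nat.mod_eq_of_lt (show 3 + p + j < n by omega),
        Nat.mod_eq_of_lt (show 3 + i' < n by omega),
        Nat.mod_eq_of_lt (show 3 + p + j' < n by omega),
        Nat.mod_eq_of_lt (show 3 + p + q + k' < n by omega)] at gj
    rw [Nat.mod_eq_of_lt (show 3 + p + q + k < n by omega),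
        Nat.mod_eq_of_lt (show 3 + i' < n by omega),
        Nat.mod_eq_of_lt (show 3 + p + j' < n by omega),
        Nat.mod_eq_of_lt (show 3 + p + q + k' < n by omega)] at gk
    have : i = i' ∧ j = j' ∧ k = k' := by omega
    simp [Prod.ext_iff, this.1, this.2.1, this.2.2]
  calc p * q * r = D.card := by simp [hD, mul_assoc]
    _ = (D.image (FF n hn)).card := (Finset.card_image_of_injOn hinj).symm
    _ = (↑(D.image (FF n hn)) : Set (Finset (Fin n))).ncard := (Set.ncard_coe_finset _).symm
    _ ≤ c6Count (GG n) := by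
        apply Set.ncard_le_ncard _ (Set.toFinite _)
        intro s hs
        simp only [Finset.coe_image, Set.mem_image, Finset.mem_coe] at hs
        obtain ⟨t, ht, rfl⟩ := hs
        exact hind t ht

end Aux

theorem stmt14 (n : ℕ) (hn : 6 ≤ n) :
    (∃ G : SimpleGraph (Fin n), G.Planar ∧ h0 n ≤ c6Count G) ∧ h0 n ≤ fI n := by
  have hp := GG_planar (n := n) hn
  have hc := count_lb (n := n) hn
  refine ⟨⟨GG n, hp, hc⟩, ?_⟩
  have hmem : c6Count (GG n) ∈ {m | ∃ G : SimpleGraph (Fin n), G.Planar ∧ c6Count G = m} :=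
    ⟨GG n, hp, rfl⟩
  have hbdd : BddAbove {m | ∃ G : SimpleGraph (Fin n), G.Planar ∧ c6Count G = m} := by
    refine ⟨Nat.card (Finset (Fin n)), ?_⟩
    rintro m ⟨G, -, rfl⟩
    calc c6Count G ≤ (Set.univ : Set (Finset (Fin n))).ncard :=
          Set.ncard_le_ncard (Set.subset_univ _) Set.finite_univ
      _ = _ := Set.ncard_univ _
  exact le_trans hc (le_csSup hbdd hmem)
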